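/- For symmetric traceless rank-l1 and rank-l2 Cartesian tensors x and y (l1, l2 ≥ 1), the double contraction with the Levi-Civita symbol defined by (ε : x ·(s)· y)_{i1, rest} = Σ_{i2,i3} ε_{i1 i2 i3} (x ·(s)· y)_{i2 i3, rest} is equivariant under the action of SO(3): applying R ∈ SO(3) to x and y and then forming the expression equals applying R to the result. -/
import Mathlib


open Matrix

set_option maxHeartbeats 1600000

/-- Rank-`n` Cartesian tensor over `ℝ^3`. -/
def CT (n : ℕ) : Type := (Fin n → Fin 3) → ℝ

/-- Induced action of a 3×3 matrix on a rank-`n` Cartesian tensor. -/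
def act {n : ℕ} (R : Matrix (Fin 3) (Fin 3) ℝ) (T : CT n) : CT n :=
  fun i => ∑ j : Fin n → Fin 3, (∏ k : Fin n, R (i k) (j k)) * T j

/-- Total symmetry of a Cartesian tensor. -/
def IsSym {n : ℕ} (T : CT n) : Prop :=
  ∀ σ : Equiv.Perm (Fin n), ∀ i, T (i ∘ σ) = T i

/-- Tracelessness: contraction over any pair of distinct indices vanishes. -/
def IsTraceless {n : ℕ} (T : CT n) : Prop :=
  ∀ p q : Fin n, p ≠ q → ∀ i : Fin n → Fin 3,
    ∑ c : Fin 3, T (fun k => if k = p then c else if k = q then c else i k) = 0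

/-- The Levi-Civita symbol on three indices. -/
noncomputable def eps (i j k : Fin 3) : ℝ :=
  (((i : ℕ) : ℝ) - ((j : ℕ) : ℝ)) * (((j : ℕ) : ℝ) - ((k : ℕ) : ℝ))
    * (((k : ℕ) : ℝ) - ((i : ℕ) : ℝ)) / 2

/-- Double contraction with the Levi-Civita symbol of the `s`-fold contraction of
`x` and `y`: `(ε : x ·(s)· y)_{i1, rest} = Σ_{i2 i3} ε_{i1 i2 i3} (x ·(s)· y)_{i2 i3, rest}`. -/
noncomputable def epsContr {s a b : ℕ} (x : CT (s + (a + 1))) (y : CT (s + (b + 1))) :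
    CT (a + b + 1) :=
  fun i => ∑ j2 : Fin 3, ∑ j3 : Fin 3, eps (i 0) j2 j3 *
    ∑ α : Fin s → Fin 3,
      x (Fin.append α (Fin.cons j2 fun k => Fin.tail i (Fin.castAdd b k))) *
        y (Fin.append α (Fin.cons j3 fun k => Fin.tail i (Fin.natAdd a k)))

/- ---------- generic sum lemmas ---------- -/

theorem sum_append {m n : ℕ} (f : (Fin (m+n) → Fin 3) → ℝ) :
    ∑ p : Fin (m+n) → Fin 3, f p
      = ∑ u : Fin m → Fin 3, ∑ v : Fin n → Fin 3, f (Fin.append u v) := by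
  calc ∑ p : Fin (m+n) → Fin 3, f p
      = ∑ uv : (Fin m → Fin 3) × (Fin n → Fin 3), f (Fin.append uv.1 uv.2) := by
        refine (Fintype.sum_equiv ((Equiv.sumArrowEquivProdArrow _ _ _).symm.trans
          (Equiv.arrowCongr finSumFinEquiv (Equiv.refl _))) _ _ ?_).symm
        intro uv
        congr 1
        funext x
        induction x using Fin.addCases with
        | left x => simp [Equiv.sumArrowEquivProdArrow, Equiv.arrowCongr, Fin.append_left]
        | right x => simp [Equiv.sumArrowEquivProdArrow, Equiv.arrowCongr, Fin.append_right]
    _ = _ := Fintype.sum_prod_type _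

theorem sum_cons {n : ℕ} (f : (Fin (n+1) → Fin 3) → ℝ) :
    ∑ p : Fin (n+1) → Fin 3, f p
      = ∑ c : Fin 3, ∑ v : Fin n → Fin 3, f (Fin.cons c v) := by
  calc ∑ p : Fin (n+1) → Fin 3, f p
      = ∑ cv : Fin 3 × (Fin n → Fin 3), f (Fin.cons cv.1 cv.2) :=
        (Fintype.sum_equiv (Fin.consEquiv (fun _ => Fin 3)) _ _ (by intro cv; rfl)).symm
    _ = _ := Fintype.sum_prod_type _

theorem sum_pi_prod {s : ℕ} (g : Fin s → Fin 3 → ℝ) :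
    ∑ α : Fin s → Fin 3, ∏ k : Fin s, g k (α k) = ∏ k : Fin s, ∑ c : Fin 3, g k c := by
  rw [Finset.prod_univ_sum, Fintype.piFinset_univ]

/-- move the outermost of 7 sums to be innermost -/
theorem rot7 {A B C D E F G : Type*} [Fintype A] [Fintype B] [Fintype C] [Fintype D]
    [Fintype E] [Fintype F] [Fintype G] (f : A → B → C → D → E → F → G → ℝ) :
    ∑ a : A, ∑ b : B, ∑ c : C, ∑ d : D, ∑ e : E, ∑ g : F, ∑ h : G, f a b c d e g h
      = ∑ b : B, ∑ c : C, ∑ d : D, ∑ e : E, ∑ g : F, ∑ h : G, ∑ a : A, f a b c d e g h := by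
  have h1 : ∑ p : A × B × C × D × E × F × G,
      f p.1 p.2.1 p.2.2.1 p.2.2.2.1 p.2.2.2.2.1 p.2.2.2.2.2.1 p.2.2.2.2.2.2
      = ∑ a : A, ∑ b : B, ∑ c : C, ∑ d : D, ∑ e : E, ∑ g : F, ∑ h : G, f a b c d e g h := by
    simp only [Fintype.sum_prod_type]
  have h2 : ∑ p : B × C × D × E × F × G × A,
      f p.2.2.2.2.2.2 p.1 p.2.1 p.2.2.1 p.2.2.2.1 p.2.2.2.2.1 p.2.2.2.2.2.1
      = ∑ b : B, ∑ c : C, ∑ d : D, ∑ e : E, ∑ g : F, ∑ h : G, ∑ a : A, f a b c d e g h := by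
    simp only [Fintype.sum_prod_type]
  refine h1.symm.trans (Eq.trans ?_ h2)
  exact Fintype.sum_equiv
    ⟨fun p => (p.2.1, p.2.2.1, p.2.2.2.1, p.2.2.2.2.1, p.2.2.2.2.2.1, p.2.2.2.2.2.2, p.1),
     fun q => (q.2.2.2.2.2.2, q.1, q.2.1, q.2.2.1, q.2.2.2.1, q.2.2.2.2.1, q.2.2.2.2.2.1),
     fun p => rfl, fun q => rfl⟩ _ _ (fun p => rfl)

/-- reorder six sums: (a,b,c,d,e,g) ↦ (g,e,c,d,b,a) -/
theorem reorder6 {A B C D E F : Type*} [Fintype A] [Fintype B] [Fintype C] [Fintype D]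
    [Fintype E] [Fintype F] (f : A → B → C → D → E → F → ℝ) :
    ∑ a : A, ∑ b : B, ∑ c : C, ∑ d : D, ∑ e : E, ∑ g : F, f a b c d e g
      = ∑ g : F, ∑ e : E, ∑ c : C, ∑ d : D, ∑ b : B, ∑ a : A, f a b c d e g := by
  have h1 : ∑ p : A × B × C × D × E × F,
      f p.1 p.2.1 p.2.2.1 p.2.2.2.1 p.2.2.2.2.1 p.2.2.2.2.2
      = ∑ a : A, ∑ b : B, ∑ c : C, ∑ d : D, ∑ e : E, ∑ g : F, f a b c d e g := by
    simp only [Fintype.sum_prod_type]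
  have h2 : ∑ p : F × E × C × D × B × A,
      f p.2.2.2.2.2 p.2.2.2.2.1 p.2.2.1 p.2.2.2.1 p.2.1 p.1
      = ∑ g : F, ∑ e : E, ∑ c : C, ∑ d : D, ∑ b : B, ∑ a : A, f a b c d e g := by
    simp only [Fintype.sum_prod_type]
  refine h1.symm.trans (Eq.trans ?_ h2)
  exact Fintype.sum_equiv
    ⟨fun p => (p.2.2.2.2.2, p.2.2.2.2.1, p.2.2.1, p.2.2.2.1, p.2.1, p.1),
     fun q => (q.2.2.2.2.2, q.2.2.2.2.1, q.2.2.1, q.2.2.2.1, q.2.1, q.1),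
     fun p => rfl, fun q => rfl⟩ _ _ (fun p => rfl)

/- ---------- epsilon lemmas ---------- -/

theorem eps_inv (R : Matrix (Fin 3) (Fin 3) ℝ) (m1 m2 m3 : Fin 3) :
    ∑ j1 : Fin 3, ∑ j2 : Fin 3, ∑ j3 : Fin 3,
      eps j1 j2 j3 * R j1 m1 * R j2 m2 * R j3 m3 = R.det * eps m1 m2 m3 := by
  rw [Matrix.det_fin_three]
  simp only [Fin.sum_univ_three]
  have h2 : (⟨2, by omega⟩ : Fin 3) = 2 := rfl
  fin_cases m1 <;> fin_cases m2 <;> fin_cases m3 <;> norm_num [eps, h2] <;> ring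

theorem eps_mixed (R : Matrix (Fin 3) (Fin 3) ℝ) (hR : Rᵀ * R = 1) (hdet : R.det = 1)
    (j1 m2 m3 : Fin 3) :
    ∑ j2 : Fin 3, ∑ j3 : Fin 3, eps j1 j2 j3 * R j2 m2 * R j3 m3
      = ∑ m1 : Fin 3, R j1 m1 * eps m1 m2 m3 := by
  have hR' : R * Rᵀ = 1 := mul_eq_one_comm.mp hR
  have hcol : ∀ j k : Fin 3, ∑ m : Fin 3, R j m * R k m = if j = k then 1 else 0 := by
    intro j k
    have := congrFun (congrFun hR' j) k
    simpa [Matrix.mul_apply, Matrix.one_apply, Matrix.transpose_apply] using this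
  calc ∑ j2 : Fin 3, ∑ j3 : Fin 3, eps j1 j2 j3 * R j2 m2 * R j3 m3
      = ∑ k1 : Fin 3, (if j1 = k1 then 1 else 0) *
          ∑ j2 : Fin 3, ∑ j3 : Fin 3, eps k1 j2 j3 * R j2 m2 * R j3 m3 := by
        simp
    _ = ∑ k1 : Fin 3, (∑ m1 : Fin 3, R j1 m1 * R k1 m1) *
          ∑ j2 : Fin 3, ∑ j3 : Fin 3, eps k1 j2 j3 * R j2 m2 * R j3 m3 := by
        simp_rw [hcol]
    _ = ∑ m1 : Fin 3, R j1 m1 *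
          ∑ k1 : Fin 3, ∑ j2 : Fin 3, ∑ j3 : Fin 3,
            eps k1 j2 j3 * R k1 m1 * R j2 m2 * R j3 m3 := by
        simp_rw [Finset.sum_mul, Finset.mul_sum]
        rw [Finset.sum_comm]
        refine Finset.sum_congr rfl fun m1 _ => ?_
        refine Finset.sum_congr rfl fun k1 _ => ?_
        refine Finset.sum_congr rfl fun j2 _ => ?_
        refine Finset.sum_congr rfl fun j3 _ => ?_
        ring
    _ = ∑ m1 : Fin 3, R j1 m1 * eps m1 m2 m3 := by
        refine Finset.sum_congr rfl fun m1 _ => ?_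
        rw [eps_inv R m1 m2 m3, hdet, one_mul]

/- ---------- act on appended index ---------- -/

theorem act_split {s a : ℕ} (R : Matrix (Fin 3) (Fin 3) ℝ) (x : CT (s + (a + 1)))
    (α : Fin s → Fin 3) (c0 : Fin 3) (w : Fin a → Fin 3) :
    act R x (Fin.append α (Fin.cons c0 w)) =
      ∑ β : Fin s → Fin 3, ∑ c : Fin 3, ∑ u : Fin a → Fin 3,
        (∏ k, R (α k) (β k)) * (R c0 c * ∏ k, R (w k) (u k))
          * x (Fin.append β (Fin.cons c u)) := by
  show (∑ p : Fin (s + (a+1)) → Fin 3, (∏ k, R (Fin.append α (Fin.cons c0 w) k) (p k)) * x p) = _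
  rw [sum_append]
  refine Finset.sum_congr rfl fun β _ => ?_
  rw [sum_cons]
  refine Finset.sum_congr rfl fun c _ => ?_
  refine Finset.sum_congr rfl fun u _ => ?_
  congr 1
  rw [Fin.prod_univ_add]
  congr 1
  · refine Finset.prod_congr rfl fun k _ => ?_
    rw [Fin.append_left, Fin.append_left]
  · rw [Fin.prod_univ_succ]
    simp [Fin.append_right, Fin.cons_zero, Fin.cons_succ]

theorem sumc {A : Type*} [Fintype A] {f g : A → ℝ} (h : ∀ a, f a = g a) :
    ∑ a : A, f a = ∑ a : A, g a := Finset.sum_congr rfl (fun a _ => h a)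

theorem delta {s : ℕ} (R : Matrix (Fin 3) (Fin 3) ℝ) (hR : Rᵀ * R = 1)
    (β γ : Fin s → Fin 3) :
    ∑ α : Fin s → Fin 3, (∏ k, R (α k) (β k)) * (∏ k, R (α k) (γ k))
      = if β = γ then 1 else 0 := by
  have hrow : ∀ m m' : Fin 3, ∑ j : Fin 3, R j m * R j m' = if m = m' then 1 else 0 := by
    intro m m'
    have := congrFun (congrFun hR m) m'
    simpa [Matrix.mul_apply, Matrix.one_apply, Matrix.transpose_apply] using this
  calc ∑ α : Fin s → Fin 3, (∏ k, R (α k) (β k)) * (∏ k, R (α k) (γ k))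
      = ∑ α : Fin s → Fin 3, ∏ k, (R (α k) (β k) * R (α k) (γ k)) := by
        refine sumc fun α => ?_
        rw [Finset.prod_mul_distrib]
    _ = ∏ k, ∑ c : Fin 3, R c (β k) * R c (γ k) := sum_pi_prod (fun k c => R c (β k) * R c (γ k))
    _ = ∏ k, if β k = γ k then (1:ℝ) else 0 := by
        refine Finset.prod_congr rfl fun k _ => hrow _ _
    _ = if β = γ then 1 else 0 := by
        rw [Finset.prod_boole]
        simp [funext_iff]

theorem key {s a b : ℕ} (R : Matrix (Fin 3) (Fin 3) ℝ) (hR : Rᵀ * R = 1)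
    (x : CT (s + (a + 1))) (y : CT (s + (b + 1)))
    (iL : Fin a → Fin 3) (iR : Fin b → Fin 3) (j2 j3 : Fin 3) :
    ∑ α : Fin s → Fin 3,
        act R x (Fin.append α (Fin.cons j2 iL)) * act R y (Fin.append α (Fin.cons j3 iR))
      = ∑ β : Fin s → Fin 3, ∑ d : Fin 3, ∑ v : Fin b → Fin 3, ∑ c : Fin 3, ∑ u : Fin a → Fin 3,
          (R j2 c * ∏ k, R (iL k) (u k)) * x (Fin.append β (Fin.cons c u)) *
            ((R j3 d * ∏ k, R (iR k) (v k)) * y (Fin.append β (Fin.cons d v))) := by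
  calc ∑ α : Fin s → Fin 3,
        act R x (Fin.append α (Fin.cons j2 iL)) * act R y (Fin.append α (Fin.cons j3 iR))
      = ∑ α : Fin s → Fin 3,
          (∑ β : Fin s → Fin 3, ∑ c : Fin 3, ∑ u : Fin a → Fin 3,
            (∏ k, R (α k) (β k)) * (R j2 c * ∏ k, R (iL k) (u k))
              * x (Fin.append β (Fin.cons c u))) *
          (∑ γ : Fin s → Fin 3, ∑ d : Fin 3, ∑ v : Fin b → Fin 3,
            (∏ k, R (α k) (γ k)) * (R j3 d * ∏ k, R (iR k) (v k))
              * y (Fin.append γ (Fin.cons d v))) := by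
        refine sumc fun α => ?_
        rw [act_split, act_split]
    _ = ∑ α : Fin s → Fin 3,
          ∑ γ : Fin s → Fin 3, ∑ d : Fin 3, ∑ v : Fin b → Fin 3,
          ∑ β : Fin s → Fin 3, ∑ c : Fin 3, ∑ u : Fin a → Fin 3,
          ((∏ k, R (α k) (β k)) * (R j2 c * ∏ k, R (iL k) (u k))
              * x (Fin.append β (Fin.cons c u))) *
            ((∏ k, R (α k) (γ k)) * (R j3 d * ∏ k, R (iR k) (v k))
              * y (Fin.append γ (Fin.cons d v))) := by
        refine sumc fun α => ?_
        simp only [Finset.sum_mul, Finset.mul_sum]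
    _ = ∑ γ : Fin s → Fin 3, ∑ d : Fin 3, ∑ v : Fin b → Fin 3,
          ∑ β : Fin s → Fin 3, ∑ c : Fin 3, ∑ u : Fin a → Fin 3, ∑ α : Fin s → Fin 3,
          ((∏ k, R (α k) (β k)) * (R j2 c * ∏ k, R (iL k) (u k))
              * x (Fin.append β (Fin.cons c u))) *
            ((∏ k, R (α k) (γ k)) * (R j3 d * ∏ k, R (iR k) (v k))
              * y (Fin.append γ (Fin.cons d v))) := by
        rw [rot7]
    _ = ∑ γ : Fin s → Fin 3, ∑ d : Fin 3, ∑ v : Fin b → Fin 3,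
          ∑ β : Fin s → Fin 3, ∑ c : Fin 3, ∑ u : Fin a → Fin 3,
          (if β = γ then (1:ℝ) else 0) *
          ((R j2 c * ∏ k, R (iL k) (u k)) * x (Fin.append β (Fin.cons c u)) *
            ((R j3 d * ∏ k, R (iR k) (v k)) * y (Fin.append γ (Fin.cons d v)))) := by
        refine sumc fun γ => sumc fun d => sumc fun v => sumc fun β => sumc fun c =>
          sumc fun u => ?_
        rw [← delta R hR β γ]
        rw [Finset.sum_mul]
        refine sumc fun α => ?_
        ring
    _ = _ := by
        simp only [ite_mul, one_mul, zero_mul, Finset.sum_ite_irrel, Finset.sum_const_zero,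
          Finset.sum_ite_eq, Finset.sum_ite_eq', Finset.mem_univ, if_true]

theorem epsContr_equivariant (s a b : ℕ)
    (x : CT (s + (a + 1))) (y : CT (s + (b + 1)))
    (hxs : IsSym x) (hxt : IsTraceless x) (hys : IsSym y) (hyt : IsTraceless y)
    (R : Matrix (Fin 3) (Fin 3) ℝ) (hR : Rᵀ * R = 1) (hdet : R.det = 1) :
    epsContr (act R x) (act R y) = act R (epsContr x y) := by
  funext i
  have hL : epsContr (act R x) (act R y) i
      = ∑ β : Fin s → Fin 3, ∑ d : Fin 3, ∑ v : Fin b → Fin 3, ∑ c : Fin 3,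
          ∑ u : Fin a → Fin 3, ∑ m : Fin 3,
          (R (i 0) m * eps m c d) *
            ((∏ k, R (Fin.tail i (Fin.castAdd b k)) (u k)) * x (Fin.append β (Fin.cons c u)) *
              ((∏ k, R (Fin.tail i (Fin.natAdd a k)) (v k)) * y (Fin.append β (Fin.cons d v)))) := by
    calc epsContr (act R x) (act R y) i
        = ∑ j2 : Fin 3, ∑ j3 : Fin 3, eps (i 0) j2 j3 *
            ∑ α : Fin s → Fin 3,
              act R x (Fin.append α (Fin.cons j2 fun k => Fin.tail i (Fin.castAdd b k))) *
                act R y (Fin.append α (Fin.cons j3 fun k => Fin.tail i (Fin.natAdd a k))) := rfl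
      _ = ∑ j2 : Fin 3, ∑ j3 : Fin 3, eps (i 0) j2 j3 *
            ∑ β : Fin s → Fin 3, ∑ d : Fin 3, ∑ v : Fin b → Fin 3, ∑ c : Fin 3,
              ∑ u : Fin a → Fin 3,
              (R j2 c * ∏ k, R (Fin.tail i (Fin.castAdd b k)) (u k)) *
                  x (Fin.append β (Fin.cons c u)) *
                ((R j3 d * ∏ k, R (Fin.tail i (Fin.natAdd a k)) (v k)) *
                  y (Fin.append β (Fin.cons d v))) :=
          sumc fun j2 => sumc fun j3 =>
            congrArg (HMul.hMul (eps (i 0) j2 j3)) (key R hR x y _ _ j2 j3)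
      _ = ∑ j2 : Fin 3, ∑ j3 : Fin 3,
            ∑ β : Fin s → Fin 3, ∑ d : Fin 3, ∑ v : Fin b → Fin 3, ∑ c : Fin 3,
              ∑ u : Fin a → Fin 3,
              eps (i 0) j2 j3 *
              ((R j2 c * ∏ k, R (Fin.tail i (Fin.castAdd b k)) (u k)) *
                  x (Fin.append β (Fin.cons c u)) *
                ((R j3 d * ∏ k, R (Fin.tail i (Fin.natAdd a k)) (v k)) *
                  y (Fin.append β (Fin.cons d v)))) := by
          refine sumc fun j2 => sumc fun j3 => ?_
          simp only [Finset.mul_sum]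
      _ = ∑ β : Fin s → Fin 3, ∑ d : Fin 3, ∑ v : Fin b → Fin 3, ∑ c : Fin 3,
            ∑ u : Fin a → Fin 3, ∑ j2 : Fin 3, ∑ j3 : Fin 3,
              eps (i 0) j2 j3 *
              ((R j2 c * ∏ k, R (Fin.tail i (Fin.castAdd b k)) (u k)) *
                  x (Fin.append β (Fin.cons c u)) *
                ((R j3 d * ∏ k, R (Fin.tail i (Fin.natAdd a k)) (v k)) *
                  y (Fin.append β (Fin.cons d v)))) := by
          rw [rot7, rot7]
      _ = _ := by
          refine sumc fun β => sumc fun d => sumc fun v => sumc fun c => sumc fun u => ?_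
          calc ∑ j2 : Fin 3, ∑ j3 : Fin 3,
                eps (i 0) j2 j3 *
                ((R j2 c * ∏ k, R (Fin.tail i (Fin.castAdd b k)) (u k)) *
                    x (Fin.append β (Fin.cons c u)) *
                  ((R j3 d * ∏ k, R (Fin.tail i (Fin.natAdd a k)) (v k)) *
                    y (Fin.append β (Fin.cons d v))))
              = ∑ j2 : Fin 3, ∑ j3 : Fin 3,
                (eps (i 0) j2 j3 * R j2 c * R j3 d) *
                ((∏ k, R (Fin.tail i (Fin.castAdd b k)) (u k)) *
                    x (Fin.append β (Fin.cons c u)) *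
                  ((∏ k, R (Fin.tail i (Fin.natAdd a k)) (v k)) *
                    y (Fin.append β (Fin.cons d v)))) :=
                sumc fun j2 => sumc fun j3 => by ring
            _ = (∑ j2 : Fin 3, ∑ j3 : Fin 3, eps (i 0) j2 j3 * R j2 c * R j3 d) *
                ((∏ k, R (Fin.tail i (Fin.castAdd b k)) (u k)) *
                    x (Fin.append β (Fin.cons c u)) *
                  ((∏ k, R (Fin.tail i (Fin.natAdd a k)) (v k)) *
                    y (Fin.append β (Fin.cons d v)))) := by
                simp only [Finset.sum_mul]
            _ = (∑ m : Fin 3, R (i 0) m * eps m c d) *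
                ((∏ k, R (Fin.tail i (Fin.castAdd b k)) (u k)) *
                    x (Fin.append β (Fin.cons c u)) *
                  ((∏ k, R (Fin.tail i (Fin.natAdd a k)) (v k)) *
                    y (Fin.append β (Fin.cons d v)))) := by
                rw [eps_mixed R hR hdet]
            _ = _ := by rw [Finset.sum_mul]
  have hR2 : act R (epsContr x y) i
      = ∑ m : Fin 3, ∑ u : Fin a → Fin 3, ∑ v : Fin b → Fin 3, ∑ c : Fin 3, ∑ d : Fin 3,
          ∑ β : Fin s → Fin 3,
          (R (i 0) m * ((∏ k, R (Fin.tail i (Fin.castAdd b k)) (u k)) *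
              (∏ k, R (Fin.tail i (Fin.natAdd a k)) (v k)))) *
            (eps m c d * (x (Fin.append β (Fin.cons c u)) * y (Fin.append β (Fin.cons d v)))) := by
    calc act R (epsContr x y) i
        = ∑ j : Fin (a + b + 1) → Fin 3, (∏ k, R (i k) (j k)) * epsContr x y j := rfl
      _ = ∑ m : Fin 3, ∑ w : Fin (a + b) → Fin 3,
            (∏ k, R (i k) ((Fin.cons m w : Fin (a+b+1) → Fin 3) k)) * epsContr x y (Fin.cons m w) := sum_cons _
      _ = ∑ m : Fin 3, ∑ u : Fin a → Fin 3, ∑ v : Fin b → Fin 3,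
            (∏ k, R (i k) ((Fin.cons m (Fin.append u v) : Fin (a+b+1) → Fin 3) k)) *
              epsContr x y (Fin.cons m (Fin.append u v)) :=
          sumc fun m => sum_append _
      _ = ∑ m : Fin 3, ∑ u : Fin a → Fin 3, ∑ v : Fin b → Fin 3,
            (R (i 0) m * ((∏ k, R (Fin.tail i (Fin.castAdd b k)) (u k)) *
                (∏ k, R (Fin.tail i (Fin.natAdd a k)) (v k)))) *
              (∑ c : Fin 3, ∑ d : Fin 3, eps m c d *
                ∑ β : Fin s → Fin 3,
                  x (Fin.append β (Fin.cons c u)) * y (Fin.append β (Fin.cons d v))) := by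
          refine sumc fun m => sumc fun u => sumc fun v => ?_
          congr 1
          · rw [Fin.prod_univ_succ, Fin.prod_univ_add]
            simp only [Fin.cons_zero, Fin.cons_succ, Fin.append_left, Fin.append_right, Fin.tail]
          · simp only [epsContr, Fin.cons_zero, Fin.tail_cons, Fin.append_left, Fin.append_right]
      _ = _ := by
          refine sumc fun m => sumc fun u => sumc fun v => ?_
          simp only [Finset.mul_sum]
  refine hL.trans ((reorder6 _).trans (Eq.trans ?_ hR2.symm))
  refine sumc fun m => sumc fun u => sumc fun v => sumc fun c => sumc fun d => sumc fun β => ?_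
  ring
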